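/- Let u be a C^2 function on the region |x| > |t| of R^{1+d} and define v(s,y) = (|y|^2 - s^2)^{-(d-1)/2} u(s/(|y|^2 - s^2), y/(|y|^2 - s^2)) on |y| > |s|. Then □_{t,x} u, evaluated at the corresponding point, equals (|y|+s)^{(d+3)/2} (|y|-s)^{(d+3)/2} □_{s,y} v(s,y). In particular, if □_{t,x} u = |u|^{4/(d-2)} u, then □_{s,y} v = (|y|^2 - s^2)^{2/(d-2)} |v|^{4/(d-2)} v. -/

import Mathlib

set_option maxHeartbeats 1000000

open Real Filter

/-- Second derivative of `f` at `p` in direction `v`. -/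
noncomputable def dirDeriv2 {d : ℕ} (f : ℝ × EuclideanSpace ℝ (Fin d) → ℝ)
    (p v : ℝ × EuclideanSpace ℝ (Fin d)) : ℝ :=
  iteratedDeriv 2 (fun τ : ℝ => f (p + τ • v)) 0

/-- The d'Alembertian `□ = ∂_t² - Δ_x` on `ℝ × ℝ^d`. -/
noncomputable def waveOp {d : ℕ} (f : ℝ × EuclideanSpace ℝ (Fin d) → ℝ)
    (p : ℝ × EuclideanSpace ℝ (Fin d)) : ℝ :=
  dirDeriv2 f p (1, 0) - ∑ i : Fin d, dirDeriv2 f p (0, EuclideanSpace.single i 1)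



lemma second_deriv_comp {d : ℕ} {U : Set (ℝ × EuclideanSpace ℝ (Fin d))} (hU : IsOpen U)
    {u : ℝ × EuclideanSpace ℝ (Fin d) → ℝ} (hu : ContDiffOn ℝ 2 u U)
    {c c₁ : ℝ → ℝ × EuclideanSpace ℝ (Fin d)} {a₂ : ℝ × EuclideanSpace ℝ (Fin d)}
    {φ φ₁ : ℝ → ℝ} {b₂ : ℝ}
    (hmem : ∀ᶠ τ in nhds (0:ℝ), c τ ∈ U)
    (hc : ∀ᶠ τ in nhds (0:ℝ), HasDerivAt c (c₁ τ) τ)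
    (hc₁ : HasDerivAt c₁ a₂ 0)
    (hφ : ∀ᶠ τ in nhds (0:ℝ), HasDerivAt φ (φ₁ τ) τ)
    (hφ₁ : HasDerivAt φ₁ b₂ 0) :
    iteratedDeriv 2 (fun τ => φ τ * u (c τ)) 0
      = b₂ * u (c 0) + 2 * (φ₁ 0 * (fderiv ℝ u (c 0)) (c₁ 0))
        + φ 0 * ((fderiv ℝ (fderiv ℝ u) (c 0)) (c₁ 0) (c₁ 0) + (fderiv ℝ u (c 0)) a₂) := by
  have hF : ContDiffOn ℝ 1 (fderiv ℝ u) U := hu.fderiv_of_isOpen hU (by norm_num)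
  have hder : deriv (fun τ => φ τ * u (c τ))
      =ᶠ[nhds (0:ℝ)] fun τ => φ₁ τ * u (c τ) + φ τ * (fderiv ℝ u (c τ)) (c₁ τ) := by
    filter_upwards [hmem, hc, hφ] with τ h1 h2 h3
    have hud : DifferentiableAt ℝ u (c τ) :=
      (hu.contDiffAt (hU.mem_nhds h1)).differentiableAt two_ne_zero
    exact (h3.mul (hud.hasFDerivAt.comp_hasDerivAt τ h2)).deriv
  have h2 : iteratedDeriv 2 (fun τ => φ τ * u (c τ)) 0
      = deriv (deriv (fun τ => φ τ * u (c τ))) 0 := by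
    rw [show (2:ℕ) = 1 + 1 from rfl, iteratedDeriv_succ, iteratedDeriv_one]
  rw [h2, hder.deriv_eq]
  have hu0 : c 0 ∈ U := hmem.self_of_nhds
  have hc0 : HasDerivAt c (c₁ 0) 0 := hc.self_of_nhds
  have hud : DifferentiableAt ℝ u (c 0) :=
    (hu.contDiffAt (hU.mem_nhds hu0)).differentiableAt two_ne_zero
  have hFd : DifferentiableAt ℝ (fderiv ℝ u) (c 0) :=
    (hF.contDiffAt (hU.mem_nhds hu0)).differentiableAt one_ne_zero
  have huc : HasDerivAt (fun τ => u (c τ)) ((fderiv ℝ u (c 0)) (c₁ 0)) 0 :=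
    hud.hasFDerivAt.comp_hasDerivAt 0 hc0
  have hFc : HasDerivAt (fun τ => fderiv ℝ u (c τ)) ((fderiv ℝ (fderiv ℝ u) (c 0)) (c₁ 0)) 0 :=
    hFd.hasFDerivAt.comp_hasDerivAt 0 hc0
  have happ : HasDerivAt (fun τ => (fderiv ℝ u (c τ)) (c₁ τ))
      ((fderiv ℝ (fderiv ℝ u) (c 0)) (c₁ 0) (c₁ 0) + (fderiv ℝ u (c 0)) a₂) 0 :=
    hFc.clm_apply hc₁
  rw [(show HasDerivAt (fun τ => φ₁ τ * u (c τ) + φ τ * (fderiv ℝ u (c τ)) (c₁ τ)) _ 0 from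
    (hφ₁.mul huc).add ((hφ.self_of_nhds).mul happ)).deriv]
  ring

lemma isOpen_region (d : ℕ) : IsOpen {p : ℝ × EuclideanSpace ℝ (Fin d) | ‖p.2‖ > |p.1|} :=
  isOpen_lt (continuous_abs.comp continuous_fst) (continuous_norm.comp continuous_snd)

lemma key {d : ℕ} {u : ℝ × EuclideanSpace ℝ (Fin d) → ℝ}
    (hu : ContDiffOn ℝ 2 u {p : ℝ × EuclideanSpace ℝ (Fin d) | ‖p.2‖ > |p.1|})
    {s : ℝ} {y : EuclideanSpace ℝ (Fin d)} (hsy : ‖y‖ > |s|) (α : ℝ)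
    (ε : ℝ) (z : EuclideanSpace ℝ (Fin d)) {m n : ℝ}
    (hm : (inner ℝ y z : ℝ) = m + s * ε) (hn : ‖z‖ ^ 2 = n + ε ^ 2) :
    iteratedDeriv 2 (fun τ : ℝ =>
        (‖y + τ • z‖ ^ 2 - (s + τ * ε) ^ 2) ^ α *
          u ((s + τ * ε) / (‖y + τ • z‖ ^ 2 - (s + τ * ε) ^ 2),
             (‖y + τ • z‖ ^ 2 - (s + τ * ε) ^ 2)⁻¹ • (y + τ • z))) 0
      = (4*α*(α-1)*m^2 * (‖y‖^2 - s^2) ^ (α-2) + 2*α*n*(‖y‖^2 - s^2) ^ (α-1))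
            * u (s / (‖y‖^2 - s^2), (‖y‖^2 - s^2)⁻¹ • y)
        + (4*α*m*(‖y‖^2 - s^2) ^ (α-1)) *
            (fderiv ℝ u (s / (‖y‖^2 - s^2), (‖y‖^2 - s^2)⁻¹ • y))
              ((‖y‖^2 - s^2)⁻¹ • ((ε, z) : ℝ × EuclideanSpace ℝ (Fin d))
                - (2*m/(‖y‖^2 - s^2)^2) • ((s, y) : ℝ × EuclideanSpace ℝ (Fin d)))
        + (‖y‖^2 - s^2) ^ α *
            ((fderiv ℝ (fderiv ℝ u) (s / (‖y‖^2 - s^2), (‖y‖^2 - s^2)⁻¹ • y))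
              ((‖y‖^2 - s^2)⁻¹ • ((ε, z) : ℝ × EuclideanSpace ℝ (Fin d))
                - (2*m/(‖y‖^2 - s^2)^2) • ((s, y) : ℝ × EuclideanSpace ℝ (Fin d)))
              ((‖y‖^2 - s^2)⁻¹ • ((ε, z) : ℝ × EuclideanSpace ℝ (Fin d))
                - (2*m/(‖y‖^2 - s^2)^2) • ((s, y) : ℝ × EuclideanSpace ℝ (Fin d)))
             + (fderiv ℝ u (s / (‖y‖^2 - s^2), (‖y‖^2 - s^2)⁻¹ • y))
              ((-4*m/(‖y‖^2 - s^2)^2) • ((ε, z) : ℝ × EuclideanSpace ℝ (Fin d))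
                + (8*m^2/(‖y‖^2 - s^2)^3 - 2*n/(‖y‖^2 - s^2)^2) • ((s, y) : ℝ × EuclideanSpace ℝ (Fin d)))) := by
  have hρ : 0 < ‖y‖ ^ 2 - s ^ 2 := by
    have h1 : |s| ^ 2 < ‖y‖ ^ 2 := by
      apply pow_lt_pow_left₀ hsy (abs_nonneg s); norm_num
    rw [sq_abs] at h1; linarith
  set ρ := ‖y‖ ^ 2 - s ^ 2 with hρdef
  have hPexp : ∀ τ : ℝ, ‖y + τ • z‖ ^ 2 - (s + τ * ε) ^ 2 = ρ + 2*m*τ + n*τ^2 := by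
    intro τ
    rw [norm_add_sq_real, real_inner_smul_right, norm_smul, mul_pow, hm]
    simp [sq_abs]
    rw [hn]; ring
  have hPd : ∀ τ : ℝ, HasDerivAt (fun τ : ℝ => ρ + 2*m*τ + n*τ^2) (2*m + 2*n*τ) τ := by
    intro τ
    have h1 : HasDerivAt (fun τ:ℝ => 2*m*τ) (2*m) τ := by
      simpa using (hasDerivAt_id τ).const_mul (2*m)
    have h2 : HasDerivAt (fun τ:ℝ => n*τ^2) (2*n*τ) τ := by
      have := (hasDerivAt_pow 2 τ).const_mul n
      exact this.congr_deriv (by push_cast; ring)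
    exact (h1.const_add ρ).add h2
  have hevpos : ∀ᶠ τ in nhds (0:ℝ), 0 < ρ + 2*m*τ + n*τ^2 := by
    have hcont : ContinuousAt (fun τ:ℝ => ρ + 2*m*τ + n*τ^2) 0 := (hPd 0).continuousAt
    have h0 : (0:ℝ) < ρ + 2*m*0 + n*0^2 := by simpa using hρ
    exact hcont.eventually (eventually_gt_nhds h0)
  have hlin : ∀ τ : ℝ, HasDerivAt (fun τ : ℝ => 2*m + 2*n*τ) (2*n) τ := by
    intro τ; simpa using ((hasDerivAt_id τ).const_mul (2*n)).const_add (2*m)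
  have hnum : ∀ τ : ℝ, HasDerivAt (fun τ:ℝ => s + τ*ε) ε τ := by
    intro τ; simpa using ((hasDerivAt_id τ).mul_const ε).const_add s
  have hB : ∀ τ : ℝ, HasDerivAt (fun τ:ℝ => y + τ•z) z τ := by
    intro τ; simpa using ((hasDerivAt_id τ).smul_const z).const_add y
  -- the curve and its derivative
  have hc : ∀ᶠ τ in nhds (0:ℝ), HasDerivAt
      (fun τ : ℝ => ((s + τ * ε) / (ρ + 2*m*τ + n*τ^2), (ρ + 2*m*τ + n*τ^2)⁻¹ • (y + τ • z)))
      ((ε * (ρ + 2*m*τ + n*τ^2) - (s + τ*ε) * (2*m + 2*n*τ)) / (ρ + 2*m*τ + n*τ^2)^2,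
        (ρ + 2*m*τ + n*τ^2)⁻¹ • z + (-(2*m + 2*n*τ) / (ρ + 2*m*τ + n*τ^2)^2) • (y + τ • z)) τ := by
    filter_upwards [hevpos] with τ hP
    exact ((hnum τ).div (hPd τ) hP.ne').prodMk (((hPd τ).inv hP.ne').smul (hB τ))
  have hmem : ∀ᶠ τ in nhds (0:ℝ),
      ((s + τ * ε) / (ρ + 2*m*τ + n*τ^2), (ρ + 2*m*τ + n*τ^2)⁻¹ • (y + τ • z))
        ∈ {p : ℝ × EuclideanSpace ℝ (Fin d) | ‖p.2‖ > |p.1|} := by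
    filter_upwards [hevpos] with τ hP
    have hPe := hPexp τ
    have h1 : |s + τ*ε| < ‖y + τ•z‖ := by
      nlinarith [abs_nonneg (s+τ*ε), norm_nonneg (y+τ•z), sq_abs (s+τ*ε)]
    show |_| < ‖_‖
    rw [norm_smul, abs_div, norm_inv, Real.norm_eq_abs, abs_of_pos hP]
    rw [inv_mul_eq_div, div_lt_div_iff_of_pos_right hP]
    exact h1
  -- derivative of the derivative curve at 0
  have hρ0 : (0:ℝ) < ρ + 2*m*0 + n*0^2 := by simpa using hρ
  have hD := (hPd 0).pow 2
  have hN : HasDerivAt (fun τ : ℝ => ε * (ρ + 2*m*τ + n*τ^2) - (s + τ*ε) * (2*m + 2*n*τ))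
      (ε * (2*m + 2*n*0) - (ε * (2*m + 2*n*0) + (s + 0*ε) * (2*n))) 0 :=
    ((hPd 0).const_mul ε).sub ((hnum 0).mul (hlin 0))
  have hfirst := hN.div hD (pow_ne_zero 2 hρ0.ne')
  have hi1 := ((hPd 0).inv hρ0.ne').smul_const z
  have hA := ((hlin 0).neg.div hD (pow_ne_zero 2 hρ0.ne'))
  have hi2 := hA.smul (hB 0)
  have hc₁ := hfirst.prodMk (hi1.add hi2)
  -- rpow weight
  have hφ : ∀ᶠ τ in nhds (0:ℝ), HasDerivAt (fun τ : ℝ => (ρ + 2*m*τ + n*τ^2) ^ α)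
      ((2*m + 2*n*τ) * α * (ρ + 2*m*τ + n*τ^2) ^ (α - 1)) τ := by
    filter_upwards [hevpos] with τ hP
    exact (hPd τ).rpow_const (Or.inl hP.ne')
  have hrp : HasDerivAt (fun τ : ℝ => (ρ + 2*m*τ + n*τ^2) ^ (α-1))
      ((2*m + 2*n*0) * (α-1) * (ρ + 2*m*0 + n*0^2) ^ (α-1-1)) 0 :=
    (hPd 0).rpow_const (Or.inl hρ0.ne')
  have hφ₁ := ((hlin 0).mul_const α).mul hrp
  have h := second_deriv_comp (isOpen_region d) hu hmem hc hc₁ hφ hφ₁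
  have hfun : (fun τ : ℝ =>
        (‖y + τ • z‖ ^ 2 - (s + τ * ε) ^ 2) ^ α *
          u ((s + τ * ε) / (‖y + τ • z‖ ^ 2 - (s + τ * ε) ^ 2),
             (‖y + τ • z‖ ^ 2 - (s + τ * ε) ^ 2)⁻¹ • (y + τ • z)))
      = (fun τ : ℝ => (ρ + 2*m*τ + n*τ^2) ^ α *
          u ((s + τ * ε) / (ρ + 2*m*τ + n*τ^2), (ρ + 2*m*τ + n*τ^2)⁻¹ • (y + τ • z))) := by
    funext τ; rw [hPexp τ]
  rw [hfun, h]
  norm_num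
  have e0 : α - 1 - 1 = α - 2 := by ring
  rw [e0]
  have e1 : ((ε * ρ - s * (2 * m)) / ρ ^ 2, ρ⁻¹ • z + (-(2 * m) / ρ ^ 2) • y)
      = ((ρ⁻¹ * ε - 2 * m / ρ ^ 2 * s, ρ⁻¹ • z - (2 * m / ρ ^ 2) • y)
          : ℝ × EuclideanSpace ℝ (Fin d)) := by
    refine Prod.ext ?_ ?_
    · show (ε * ρ - s * (2 * m)) / ρ ^ 2 = ρ⁻¹ * ε - 2 * m / ρ ^ 2 * s
      field_simp
    · show ρ⁻¹ • z + (-(2 * m) / ρ ^ 2) • y = ρ⁻¹ • z - (2 * m / ρ ^ 2) • y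
      module
  have e2 : (((-(s * (2 * n) * ρ ^ 2) - (ε * ρ - s * (2 * m)) * (2 * ρ * (2 * m))) / (ρ ^ 2) ^ 2,
        (-(2 * m) / ρ ^ 2) • z +
          ((-(2 * m) / ρ ^ 2) • z + ((-(2 * n * ρ ^ 2) + 2 * m * (2 * ρ * (2 * m))) / (ρ ^ 2) ^ 2) • y))
          : ℝ × EuclideanSpace ℝ (Fin d))
      = (-(4 * m) / ρ ^ 2 * ε + (8 * m ^ 2 / ρ ^ 3 - 2 * n / ρ ^ 2) * s,
          (-(4 * m) / ρ ^ 2) • z + (8 * m ^ 2 / ρ ^ 3 - 2 * n / ρ ^ 2) • y) := by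
    refine Prod.ext ?_ ?_
    · show (-(s * (2 * n) * ρ ^ 2) - (ε * ρ - s * (2 * m)) * (2 * ρ * (2 * m))) / (ρ ^ 2) ^ 2
        = -(4 * m) / ρ ^ 2 * ε + (8 * m ^ 2 / ρ ^ 3 - 2 * n / ρ ^ 2) * s
      field_simp; ring
    · show (-(2 * m) / ρ ^ 2) • z +
          ((-(2 * m) / ρ ^ 2) • z + ((-(2 * n * ρ ^ 2) + 2 * m * (2 * ρ * (2 * m))) / (ρ ^ 2) ^ 2) • y)
        = (-(4 * m) / ρ ^ 2) • z + (8 * m ^ 2 / ρ ^ 3 - 2 * n / ρ ^ 2) • y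
      match_scalars <;> (field_simp; ring)
  rw [e1, e2]
  ring


lemma dirDeriv2_eq_bilin {d : ℕ} {U : Set (ℝ × EuclideanSpace ℝ (Fin d))} (hU : IsOpen U)
    {u : ℝ × EuclideanSpace ℝ (Fin d) → ℝ} (hu : ContDiffOn ℝ 2 u U)
    {p w : ℝ × EuclideanSpace ℝ (Fin d)} (hp : p ∈ U) :
    dirDeriv2 u p w = fderiv ℝ (fderiv ℝ u) p w w := by
  have hline : ∀ τ : ℝ, HasDerivAt (fun τ : ℝ => p + τ • w) w τ := by
    intro τ; simpa using ((hasDerivAt_id τ).smul_const w).const_add p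
  have hmem : ∀ᶠ τ in nhds (0:ℝ), p + τ • w ∈ U := by
    have hcont : ContinuousAt (fun τ : ℝ => p + τ • w) 0 := (hline 0).continuousAt
    exact hcont (hU.mem_nhds (by simpa using hp))
  have h := second_deriv_comp hU hu (c := fun τ : ℝ => p + τ • w) (c₁ := fun _ => w)
      (a₂ := 0) (φ := fun _ => (1:ℝ)) (φ₁ := fun _ => 0) (b₂ := 0)
      hmem (Eventually.of_forall hline) (hasDerivAt_const 0 w)
      (Eventually.of_forall fun τ => hasDerivAt_const τ 1) (hasDerivAt_const 0 0)
  have hfun : (fun τ : ℝ => u (p + τ • w)) = fun τ : ℝ => (1:ℝ) * u (p + τ • w) := by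
    funext τ; rw [one_mul]
  rw [dirDeriv2, hfun, h]
  simp



/-- Conformal inversion of the wave operator: if
`v(s,y) = (|y|²-s²)^{-(d-1)/2} u((s,y)/(|y|²-s²))` on `|y| > |s|`, then
`□_{t,x} u` at the corresponding point equals
`(|y|+s)^{(d+3)/2}(|y|-s)^{(d+3)/2} □_{s,y} v(s,y)`.  In particular, if
`□ u = |u|^{4/(d-2)} u` then `□ v = (|y|²-s²)^{2/(d-2)} |v|^{4/(d-2)} v`. -/
theorem conformal_inversion_wave_equation {d : ℕ} (hd : 3 ≤ d) (hd' : d ≤ 5)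
    (u : ℝ × EuclideanSpace ℝ (Fin d) → ℝ)
    (hu : ContDiffOn ℝ 2 u {p | ‖p.2‖ > |p.1|}) :
    let v : ℝ × EuclideanSpace ℝ (Fin d) → ℝ := fun p =>
      (‖p.2‖ ^ 2 - p.1 ^ 2) ^ (-(((d : ℝ) - 1) / 2)) *
        u (p.1 / (‖p.2‖ ^ 2 - p.1 ^ 2), (‖p.2‖ ^ 2 - p.1 ^ 2)⁻¹ • p.2)
    (∀ (s : ℝ) (y : EuclideanSpace ℝ (Fin d)), ‖y‖ > |s| →
        waveOp u (s / (‖y‖ ^ 2 - s ^ 2), (‖y‖ ^ 2 - s ^ 2)⁻¹ • y)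
          = (‖y‖ + s) ^ (((d : ℝ) + 3) / 2) * (‖y‖ - s) ^ (((d : ℝ) + 3) / 2)
              * waveOp v (s, y)) ∧
    ((∀ p : ℝ × EuclideanSpace ℝ (Fin d), ‖p.2‖ > |p.1| →
          waveOp u p = |u p| ^ (4 / ((d : ℝ) - 2)) * u p) →
        ∀ (s : ℝ) (y : EuclideanSpace ℝ (Fin d)), ‖y‖ > |s| →
          waveOp v (s, y)
            = (‖y‖ ^ 2 - s ^ 2) ^ (2 / ((d : ℝ) - 2))
                * |v (s, y)| ^ (4 / ((d : ℝ) - 2)) * v (s, y)) := by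
  intro v
  have hU := isOpen_region d
  have hcore : ∀ (s : ℝ) (y : EuclideanSpace ℝ (Fin d)), ‖y‖ > |s| →
      waveOp v (s, y) = ((‖y‖ ^ 2 - s ^ 2) ^ ((-(((d : ℝ) - 1) / 2)) - 2)) * waveOp u (s / (‖y‖ ^ 2 - s ^ 2), (‖y‖ ^ 2 - s ^ 2)⁻¹ • y) := by
    intro s y hsy
    have hρ : 0 < ‖y‖ ^ 2 - s ^ 2 := by
      have h1 : |s| ^ 2 < ‖y‖ ^ 2 := by
        apply pow_lt_pow_left₀ hsy (abs_nonneg s); norm_num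
      rw [sq_abs] at h1; linarith
    have hqU : (s / (‖y‖ ^ 2 - s ^ 2), (‖y‖ ^ 2 - s ^ 2)⁻¹ • y) ∈ {p : ℝ × EuclideanSpace ℝ (Fin d) | ‖p.2‖ > |p.1|} := by
      show |_| < ‖_‖
      rw [norm_smul, abs_div, norm_inv, Real.norm_eq_abs, abs_of_pos hρ, inv_mul_eq_div,
        div_lt_div_iff_of_pos_right hρ]
      exact hsy
    have hr1 : (‖y‖ ^ 2 - s ^ 2) ^ ((-(((d : ℝ) - 1) / 2)) - 1) = ((‖y‖ ^ 2 - s ^ 2) ^ ((-(((d : ℝ) - 1) / 2)) - 2)) * (‖y‖ ^ 2 - s ^ 2) := by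
      rw [show (-(((d : ℝ) - 1) / 2)) - 1 = ((-(((d : ℝ) - 1) / 2)) - 2) + 1 by ring, Real.rpow_add hρ, Real.rpow_one]
    have hr0 : (‖y‖ ^ 2 - s ^ 2) ^ (-(((d : ℝ) - 1) / 2)) = ((‖y‖ ^ 2 - s ^ 2) ^ ((-(((d : ℝ) - 1) / 2)) - 2)) * (‖y‖ ^ 2 - s ^ 2) * (‖y‖ ^ 2 - s ^ 2) := by
      conv_lhs => rw [show (-(((d : ℝ) - 1) / 2)) = (((-(((d : ℝ) - 1) / 2)) - 2) + 1) + 1 by ring, Real.rpow_add hρ,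
        Real.rpow_add hρ, Real.rpow_one]
    have hbasis : ∑ i : Fin d, y i • (((0:ℝ), EuclideanSpace.single i (1:ℝ))
          : ℝ × EuclideanSpace ℝ (Fin d)) = (((0:ℝ), y) : ℝ × EuclideanSpace ℝ (Fin d)) := by
      refine Prod.ext ?_ ?_
      · simp [Prod.fst_sum]
      · rw [Prod.snd_sum]
        simp only [Prod.smul_mk]
        ext j
        rw [WithLp.ofLp_sum, Finset.sum_apply]
        simp [EuclideanSpace.single_apply, mul_ite]
    have hX : (((s, y)) : ℝ × EuclideanSpace ℝ (Fin d)) = s • ((((1:ℝ), (0 : EuclideanSpace ℝ (Fin d)))) : ℝ × EuclideanSpace ℝ (Fin d)) + (((0:ℝ), y) : ℝ × EuclideanSpace ℝ (Fin d)) := by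
      refine Prod.ext ?_ ?_ <;> simp
    have hs1 : ∑ i : Fin d, (y i)^2 = ‖y‖ ^ 2 := by
      rw [← real_inner_self_eq_norm_sq, PiLp.inner_apply]
      simp [RCLike.inner_apply, sq]
    have hs2 : ∑ i : Fin d, (y i * (fderiv ℝ u (s / (‖y‖ ^ 2 - s ^ 2), (‖y‖ ^ 2 - s ^ 2)⁻¹ • y)) ((((0:ℝ), EuclideanSpace.single i (1:ℝ))) : ℝ × EuclideanSpace ℝ (Fin d))) = (fderiv ℝ u (s / (‖y‖ ^ 2 - s ^ 2), (‖y‖ ^ 2 - s ^ 2)⁻¹ • y)) (((s, y)) : ℝ × EuclideanSpace ℝ (Fin d)) - s * (fderiv ℝ u (s / (‖y‖ ^ 2 - s ^ 2), (‖y‖ ^ 2 - s ^ 2)⁻¹ • y)) ((((1:ℝ), (0 : EuclideanSpace ℝ (Fin d)))) : ℝ × EuclideanSpace ℝ (Fin d)) := by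
      have h1 : ∑ i : Fin d, (y i * (fderiv ℝ u (s / (‖y‖ ^ 2 - s ^ 2), (‖y‖ ^ 2 - s ^ 2)⁻¹ • y)) ((((0:ℝ), EuclideanSpace.single i (1:ℝ))) : ℝ × EuclideanSpace ℝ (Fin d)))
          = (fderiv ℝ u (s / (‖y‖ ^ 2 - s ^ 2), (‖y‖ ^ 2 - s ^ 2)⁻¹ • y)) (((0:ℝ), y) : ℝ × EuclideanSpace ℝ (Fin d)) := by
        rw [← hbasis, map_sum]
        exact Finset.sum_congr rfl fun i _ => by rw [map_smul, smul_eq_mul]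
      rw [h1, hX, map_add, map_smul, smul_eq_mul]; ring
    have hs3 : ∑ i : Fin d, (y i * (fderiv ℝ (fderiv ℝ u) (s / (‖y‖ ^ 2 - s ^ 2), (‖y‖ ^ 2 - s ^ 2)⁻¹ • y)) ((((0:ℝ), EuclideanSpace.single i (1:ℝ))) : ℝ × EuclideanSpace ℝ (Fin d)) (((s, y)) : ℝ × EuclideanSpace ℝ (Fin d))) = (fderiv ℝ (fderiv ℝ u) (s / (‖y‖ ^ 2 - s ^ 2), (‖y‖ ^ 2 - s ^ 2)⁻¹ • y)) (((s, y)) : ℝ × EuclideanSpace ℝ (Fin d)) (((s, y)) : ℝ × EuclideanSpace ℝ (Fin d)) - s * (fderiv ℝ (fderiv ℝ u) (s / (‖y‖ ^ 2 - s ^ 2), (‖y‖ ^ 2 - s ^ 2)⁻¹ • y)) ((((1:ℝ), (0 : EuclideanSpace ℝ (Fin d)))) : ℝ × EuclideanSpace ℝ (Fin d)) (((s, y)) : ℝ × EuclideanSpace ℝ (Fin d)) := by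
      have h1 : ∑ i : Fin d, (y i * (fderiv ℝ (fderiv ℝ u) (s / (‖y‖ ^ 2 - s ^ 2), (‖y‖ ^ 2 - s ^ 2)⁻¹ • y)) ((((0:ℝ), EuclideanSpace.single i (1:ℝ))) : ℝ × EuclideanSpace ℝ (Fin d)) (((s, y)) : ℝ × EuclideanSpace ℝ (Fin d)))
          = (fderiv ℝ (fderiv ℝ u) (s / (‖y‖ ^ 2 - s ^ 2), (‖y‖ ^ 2 - s ^ 2)⁻¹ • y)) (((0:ℝ), y) : ℝ × EuclideanSpace ℝ (Fin d)) (((s, y)) : ℝ × EuclideanSpace ℝ (Fin d)) := by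
        rw [← hbasis, map_sum, ContinuousLinearMap.sum_apply]
        exact Finset.sum_congr rfl fun i _ => by
          rw [map_smul, ContinuousLinearMap.smul_apply, smul_eq_mul]
      rw [h1, hX]
      simp only [map_add, map_smul, ContinuousLinearMap.add_apply,
        ContinuousLinearMap.smul_apply, smul_eq_mul]
      ring
    have hs4 : ∑ i : Fin d, (y i * (fderiv ℝ (fderiv ℝ u) (s / (‖y‖ ^ 2 - s ^ 2), (‖y‖ ^ 2 - s ^ 2)⁻¹ • y)) (((s, y)) : ℝ × EuclideanSpace ℝ (Fin d)) ((((0:ℝ), EuclideanSpace.single i (1:ℝ))) : ℝ × EuclideanSpace ℝ (Fin d))) = (fderiv ℝ (fderiv ℝ u) (s / (‖y‖ ^ 2 - s ^ 2), (‖y‖ ^ 2 - s ^ 2)⁻¹ • y)) (((s, y)) : ℝ × EuclideanSpace ℝ (Fin d)) (((s, y)) : ℝ × EuclideanSpace ℝ (Fin d)) - s * (fderiv ℝ (fderiv ℝ u) (s / (‖y‖ ^ 2 - s ^ 2), (‖y‖ ^ 2 - s ^ 2)⁻¹ • y)) (((s, y)) : ℝ × EuclideanSpace ℝ (Fin d))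 ((((1:ℝ), (0 : EuclideanSpace ℝ (Fin d)))) : ℝ × EuclideanSpace ℝ (Fin d)) := by
      have h1 : ∑ i : Fin d, (y i * (fderiv ℝ (fderiv ℝ u) (s / (‖y‖ ^ 2 - s ^ 2), (‖y‖ ^ 2 - s ^ 2)⁻¹ • y)) (((s, y)) : ℝ × EuclideanSpace ℝ (Fin d)) ((((0:ℝ), EuclideanSpace.single i (1:ℝ))) : ℝ × EuclideanSpace ℝ (Fin d)))
          = (fderiv ℝ (fderiv ℝ u) (s / (‖y‖ ^ 2 - s ^ 2), (‖y‖ ^ 2 - s ^ 2)⁻¹ • y)) (((s, y)) : ℝ × EuclideanSpace ℝ (Fin d)) (((0:ℝ), y) : ℝ × EuclideanSpace ℝ (Fin d)) := by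
        rw [← hbasis, map_sum]
        exact Finset.sum_congr rfl fun i _ => by rw [map_smul, smul_eq_mul]
      rw [h1, hX]
      simp only [map_add, map_smul, ContinuousLinearMap.add_apply,
        ContinuousLinearMap.smul_apply, smul_eq_mul]
      ring
    have hwu : waveOp u (s / (‖y‖ ^ 2 - s ^ 2), (‖y‖ ^ 2 - s ^ 2)⁻¹ • y) = (fderiv ℝ (fderiv ℝ u) (s / (‖y‖ ^ 2 - s ^ 2), (‖y‖ ^ 2 - s ^ 2)⁻¹ • y)) ((((1:ℝ), (0 : EuclideanSpace ℝ (Fin d)))) : ℝ × EuclideanSpace ℝ (Fin d)) ((((1:ℝ), (0 : EuclideanSpace ℝ (Fin d)))) : ℝ × EuclideanSpace ℝ (Fin d)) - (∑ i : Fin d, (fderiv ℝ (fderiv ℝ u) (s / (‖y‖ ^ 2 - s ^ 2), (‖y‖ ^ 2 - s ^ 2)⁻¹ • y)) ((((0:ℝ), EuclideanSpace.single i (1:ℝ))) : ℝ × EuclideanSpace ℝ (Fin d)) ((((0:ℝ), EuclideanSpace.single i (1:ℝ))) : ℝ × EuclideanSpace ℝ (Fin d))) := by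
      rw [waveOp, dirDeriv2_eq_bilin hU hu hqU]
      congr 1
      exact Finset.sum_congr rfl fun i _ => dirDeriv2_eq_bilin hU hu hqU
    -- time direction
    have hk0 := key hu hsy (-(((d : ℝ) - 1) / 2)) 1 (0 : EuclideanSpace ℝ (Fin d)) (m := -s) (n := -1)
      (by simp) (by simp)
    have hfun0 : (fun τ : ℝ => v ((s, y) + τ • ((1:ℝ), (0 : EuclideanSpace ℝ (Fin d)))))
        = fun τ : ℝ => (‖y + τ • (0 : EuclideanSpace ℝ (Fin d))‖ ^ 2 - (s + τ * 1) ^ 2) ^ (-(((d : ℝ) - 1) / 2)) *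
            u ((s + τ * 1) / (‖y + τ • (0 : EuclideanSpace ℝ (Fin d))‖ ^ 2 - (s + τ * 1) ^ 2),
               (‖y + τ • (0 : EuclideanSpace ℝ (Fin d))‖ ^ 2 - (s + τ * 1) ^ 2)⁻¹ •
                 (y + τ • (0 : EuclideanSpace ℝ (Fin d)))) := by
      funext τ
      simp only [v, Prod.smul_mk, Prod.mk_add_mk, smul_eq_mul]
    have hd0 : dirDeriv2 v (s, y) ((1:ℝ), (0 : EuclideanSpace ℝ (Fin d)))
        = iteratedDeriv 2 (fun τ : ℝ =>
            (‖y + τ • (0 : EuclideanSpace ℝ (Fin d))‖ ^ 2 - (s + τ * 1) ^ 2) ^ (-(((d : ℝ) - 1) / 2)) *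
            u ((s + τ * 1) / (‖y + τ • (0 : EuclideanSpace ℝ (Fin d))‖ ^ 2 - (s + τ * 1) ^ 2),
               (‖y + τ • (0 : EuclideanSpace ℝ (Fin d))‖ ^ 2 - (s + τ * 1) ^ 2)⁻¹ •
                 (y + τ • (0 : EuclideanSpace ℝ (Fin d))))) 0 := by
      rw [dirDeriv2, hfun0]
    have hd0' := hd0.trans hk0
    -- space directions
    have hdi : ∀ i : Fin d, dirDeriv2 v (s, y) ((0:ℝ), EuclideanSpace.single i (1:ℝ))
        = (4*(-(((d : ℝ) - 1) / 2))*((-(((d : ℝ) - 1) / 2))-1)*((‖y‖ ^ 2 - s ^ 2) ^ ((-(((d : ℝ) - 1) / 2)) - 2))*(u (s / (‖y‖ ^ 2 - s ^ 2), (‖y‖ ^ 2 - s ^ 2)⁻¹ • y)) - 8*(-(((d : ℝ) - 1) / 2))*((‖y‖ ^ 2 - s ^ 2) ^ ((-(((d : ℝ) - 1) / 2)) - 2))/(‖y‖ ^ 2 - s ^ 2)*((fderiv ℝ u (s / (‖y‖ ^ 2 - s ^ 2), (‖y‖ ^ 2 - s ^ 2)⁻¹ • y)) (((s, y)) : ℝ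 × EuclideanSpace ℝ (Fin d))) + 8*((‖y‖ ^ 2 - s ^ 2) ^ ((-(((d : ℝ) - 1) / 2)) - 2))/(‖y‖ ^ 2 - s ^ 2)*((fderiv ℝ u (s / (‖y‖ ^ 2 - s ^ 2), (‖y‖ ^ 2 - s ^ 2)⁻¹ • y)) (((s, y)) : ℝ × EuclideanSpace ℝ (Fin d))) + 4*((‖y‖ ^ 2 - s ^ 2) ^ ((-(((d : ℝ) - 1) / 2)) - 2))/(‖y‖ ^ 2 - s ^ 2)^2*((fderiv ℝ (fderiv ℝ u) (s / (‖y‖ ^ 2 - s ^ 2), (‖y‖ ^ 2 - s ^ 2)⁻¹ • y)) (((s, y)) : ℝ × EuclideanSpace ℝ (Fin d)) (((s, y)) : ℝ × EuclideanSpace ℝ (Fin d)))) * (y i)^2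
        + (2*(-(((d : ℝ) - 1) / 2))*(‖y‖ ^ 2 - s ^ 2)*((‖y‖ ^ 2 - s ^ 2) ^ ((-(((d : ℝ) - 1) / 2)) - 2))*(u (s / (‖y‖ ^ 2 - s ^ 2), (‖y‖ ^ 2 - s ^ 2)⁻¹ • y)) - 2*((‖y‖ ^ 2 - s ^ 2) ^ ((-(((d : ℝ) - 1) / 2)) - 2))*((fderiv ℝ u (s / (‖y‖ ^ 2 - s ^ 2), (‖y‖ ^ 2 - s ^ 2)⁻¹ • y)) (((s, y)) : ℝ × EuclideanSpace ℝ (Fin d))))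
        + ((4*(-(((d : ℝ) - 1) / 2))-4)*((‖y‖ ^ 2 - s ^ 2) ^ ((-(((d : ℝ) - 1) / 2)) - 2))) * (y i * (fderiv ℝ u (s / (‖y‖ ^ 2 - s ^ 2), (‖y‖ ^ 2 - s ^ 2)⁻¹ • y)) ((((0:ℝ), EuclideanSpace.single i (1:ℝ))) : ℝ × EuclideanSpace ℝ (Fin d)))
        + (-2*((‖y‖ ^ 2 - s ^ 2) ^ ((-(((d : ℝ) - 1) / 2)) - 2))/(‖y‖ ^ 2 - s ^ 2)) * (y i * (fderiv ℝ (fderiv ℝ u) (s / (‖y‖ ^ 2 - s ^ 2), (‖y‖ ^ 2 - s ^ 2)⁻¹ • y)) ((((0:ℝ), EuclideanSpace.single i (1:ℝ))) : ℝ × EuclideanSpace ℝ (Fin d)) (((s, y)) : ℝ × EuclideanSpace ℝ (Fin d)))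
        + (-2*((‖y‖ ^ 2 - s ^ 2) ^ ((-(((d : ℝ) - 1) / 2)) - 2))/(‖y‖ ^ 2 - s ^ 2)) * (y i * (fderiv ℝ (fderiv ℝ u) (s / (‖y‖ ^ 2 - s ^ 2), (‖y‖ ^ 2 - s ^ 2)⁻¹ • y)) (((s, y)) : ℝ × EuclideanSpace ℝ (Fin d)) ((((0:ℝ), EuclideanSpace.single i (1:ℝ))) : ℝ × EuclideanSpace ℝ (Fin d)))
        + ((‖y‖ ^ 2 - s ^ 2) ^ ((-(((d : ℝ) - 1) / 2)) - 2)) * ((fderiv ℝ (fderiv ℝ u) (s / (‖y‖ ^ 2 - s ^ 2), (‖y‖ ^ 2 - s ^ 2)⁻¹ • y)) ((((0:ℝ), EuclideanSpace.single i (1:ℝ))) : ℝ × EuclideanSpace ℝ (Fin d)) ((((0:ℝ), EuclideanSpace.single i (1:ℝ))) : ℝ × EuclideanSpace ℝ (Fin d))) := by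
      intro i
      have hki := key hu hsy (-(((d : ℝ) - 1) / 2)) 0 (EuclideanSpace.single i (1:ℝ)) (m := y i) (n := 1)
        (by simp [EuclideanSpace.inner_single_right]) (by simp)
      have hfuni : (fun τ : ℝ => v ((s, y) + τ • ((0:ℝ), EuclideanSpace.single i (1:ℝ))))
          = fun τ : ℝ =>
            (‖y + τ • EuclideanSpace.single i (1:ℝ)‖ ^ 2 - (s + τ * 0) ^ 2) ^ (-(((d : ℝ) - 1) / 2)) *
            u ((s + τ * 0) / (‖y + τ • EuclideanSpace.single i (1:ℝ)‖ ^ 2 - (s + τ * 0) ^ 2),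
               (‖y + τ • EuclideanSpace.single i (1:ℝ)‖ ^ 2 - (s + τ * 0) ^ 2)⁻¹ •
                 (y + τ • EuclideanSpace.single i (1:ℝ))) := by
        funext τ
        simp only [v, Prod.smul_mk, Prod.mk_add_mk, smul_eq_mul]
      rw [dirDeriv2, hfuni, hki]
      simp only [map_sub, map_add, map_smul, ContinuousLinearMap.sub_apply,
        ContinuousLinearMap.add_apply, ContinuousLinearMap.smul_apply, smul_eq_mul]
      rw [hr0, hr1]
      field_simp
      ring
    have hsum : ∑ i : Fin d, dirDeriv2 v (s, y) ((0:ℝ), EuclideanSpace.single i (1:ℝ))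
        = (4*(-(((d : ℝ) - 1) / 2))*((-(((d : ℝ) - 1) / 2))-1)*((‖y‖ ^ 2 - s ^ 2) ^ ((-(((d : ℝ) - 1) / 2)) - 2))*(u (s / (‖y‖ ^ 2 - s ^ 2), (‖y‖ ^ 2 - s ^ 2)⁻¹ • y)) - 8*(-(((d : ℝ) - 1) / 2))*((‖y‖ ^ 2 - s ^ 2) ^ ((-(((d : ℝ) - 1) / 2)) - 2))/(‖y‖ ^ 2 - s ^ 2)*((fderiv ℝ u (s / (‖y‖ ^ 2 - s ^ 2), (‖y‖ ^ 2 - s ^ 2)⁻¹ • y)) (((s, y)) : ℝ × EuclideanSpace ℝ (Fin d))) + 8*((‖y‖ ^ 2 - s ^ 2) ^ ((-(((d : ℝ) - 1) / 2)) - 2))/(‖y‖ ^ 2 - s ^ 2)*((fderiv ℝ u (s / (‖y‖ ^ 2 - s ^ 2), (‖y‖ ^ 2 - s ^ 2)⁻¹ • y)) (((s, y)) : ℝ × EuclideanSpace ℝ (Fin d)))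
            + 4*((‖y‖ ^ 2 - s ^ 2) ^ ((-(((d : ℝ) - 1) / 2)) - 2))/(‖y‖ ^ 2 - s ^ 2)^2*((fderiv ℝ (fderiv ℝ u) (s / (‖y‖ ^ 2 - s ^ 2), (‖y‖ ^ 2 - s ^ 2)⁻¹ • y)) (((s, y)) : ℝ × EuclideanSpace ℝ (Fin d)) (((s, y)) : ℝ × EuclideanSpace ℝ (Fin d)))) * (‖y‖ ^ 2)
          + (d : ℝ) * (2*(-(((d : ℝ) - 1) / 2))*(‖y‖ ^ 2 - s ^ 2)*((‖y‖ ^ 2 - s ^ 2) ^ ((-(((d : ℝ) - 1) / 2)) - 2))*(u (s / (‖y‖ ^ 2 - s ^ 2), (‖y‖ ^ 2 - s ^ 2)⁻¹ • y)) - 2*((‖y‖ ^ 2 - s ^ 2) ^ ((-(((d : ℝ) - 1) / 2)) - 2))*((fderiv ℝ u (s / (‖y‖ ^ 2 - s ^ 2), (‖y‖ ^ 2 - s ^ 2)⁻¹ • y)) (((s, y)) : ℝ × EuclideanSpace ℝ (Fin d))))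
          + ((4*(-(((d : ℝ) - 1) / 2))-4)*((‖y‖ ^ 2 - s ^ 2) ^ ((-(((d : ℝ) - 1) / 2)) - 2))) * ((fderiv ℝ u (s / (‖y‖ ^ 2 - s ^ 2), (‖y‖ ^ 2 - s ^ 2)⁻¹ • y)) (((s, y)) : ℝ × EuclideanSpace ℝ (Fin d)) - s * (fderiv ℝ u (s / (‖y‖ ^ 2 - s ^ 2), (‖y‖ ^ 2 - s ^ 2)⁻¹ • y)) ((((1:ℝ), (0 : EuclideanSpace ℝ (Fin d)))) : ℝ × EuclideanSpace ℝ (Fin d)))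
          + (-2*((‖y‖ ^ 2 - s ^ 2) ^ ((-(((d : ℝ) - 1) / 2)) - 2))/(‖y‖ ^ 2 - s ^ 2)) * ((fderiv ℝ (fderiv ℝ u) (s / (‖y‖ ^ 2 - s ^ 2), (‖y‖ ^ 2 - s ^ 2)⁻¹ • y)) (((s, y)) : ℝ × EuclideanSpace ℝ (Fin d)) (((s, y)) : ℝ × EuclideanSpace ℝ (Fin d)) - s * (fderiv ℝ (fderiv ℝ u) (s / (‖y‖ ^ 2 - s ^ 2), (‖y‖ ^ 2 - s ^ 2)⁻¹ • y)) ((((1:ℝ), (0 : EuclideanSpace ℝ (Fin d)))) : ℝ × EuclideanSpace ℝ (Fin d)) (((s, y)) : ℝ × EuclideanSpace ℝ (Fin d)))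
          + (-2*((‖y‖ ^ 2 - s ^ 2) ^ ((-(((d : ℝ) - 1) / 2)) - 2))/(‖y‖ ^ 2 - s ^ 2)) * ((fderiv ℝ (fderiv ℝ u) (s / (‖y‖ ^ 2 - s ^ 2), (‖y‖ ^ 2 - s ^ 2)⁻¹ • y)) (((s, y)) : ℝ × EuclideanSpace ℝ (Fin d)) (((s, y)) : ℝ × EuclideanSpace ℝ (Fin d)) - s * (fderiv ℝ (fderiv ℝ u) (s / (‖y‖ ^ 2 - s ^ 2), (‖y‖ ^ 2 - s ^ 2)⁻¹ • y)) (((s, y)) : ℝ × EuclideanSpace ℝ (Fin d)) ((((1:ℝ), (0 : EuclideanSpace ℝ (Fin d)))) : ℝ × EuclideanSpace ℝ (Fin d)))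
          + ((‖y‖ ^ 2 - s ^ 2) ^ ((-(((d : ℝ) - 1) / 2)) - 2)) * (∑ i : Fin d, (fderiv ℝ (fderiv ℝ u) (s / (‖y‖ ^ 2 - s ^ 2), (‖y‖ ^ 2 - s ^ 2)⁻¹ • y)) ((((0:ℝ), EuclideanSpace.single i (1:ℝ))) : ℝ × EuclideanSpace ℝ (Fin d)) ((((0:ℝ), EuclideanSpace.single i (1:ℝ))) : ℝ × EuclideanSpace ℝ (Fin d))) := by
      simp only [hdi]
      rw [Finset.sum_add_distrib, Finset.sum_add_distrib, Finset.sum_add_distrib,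
        Finset.sum_add_distrib, Finset.sum_add_distrib]
      rw [← Finset.mul_sum, ← Finset.mul_sum, ← Finset.mul_sum, ← Finset.mul_sum,
        ← Finset.mul_sum]
      rw [Finset.sum_const, Finset.card_univ, Fintype.card_fin, nsmul_eq_mul]
      rw [hs1, hs2, hs3, hs4]
    rw [waveOp, hd0', hsum, hwu]
    simp only [map_sub, map_add, map_smul, ContinuousLinearMap.sub_apply,
      ContinuousLinearMap.add_apply, ContinuousLinearMap.smul_apply, smul_eq_mul]
    rw [hr0, hr1]
    field_simp
    ring
  constructor
  · intro s y hsy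
    have hρ : 0 < ‖y‖ ^ 2 - s ^ 2 := by
      have h1 : |s| ^ 2 < ‖y‖ ^ 2 := by
        apply pow_lt_pow_left₀ hsy (abs_nonneg s); norm_num
      rw [sq_abs] at h1; linarith
    have habs := abs_lt.mp hsy
    have h1 : (0:ℝ) ≤ ‖y‖ + s := by linarith [habs.1]
    have h2 : (0:ℝ) ≤ ‖y‖ - s := by linarith [habs.2]
    rw [hcore s y hsy]
    rw [show (‖y‖ + s) ^ (((d : ℝ) + 3) / 2) * (‖y‖ - s) ^ (((d : ℝ) + 3) / 2) *
          ((‖y‖ ^ 2 - s ^ 2) ^ ((-(((d : ℝ) - 1) / 2)) - 2) * waveOp u (s / (‖y‖ ^ 2 - s ^ 2), (‖y‖ ^ 2 - s ^ 2)⁻¹ • y))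
        = ((‖y‖ + s) * (‖y‖ - s)) ^ (((d : ℝ) + 3) / 2) * (‖y‖ ^ 2 - s ^ 2) ^ ((-(((d : ℝ) - 1) / 2)) - 2)
            * waveOp u (s / (‖y‖ ^ 2 - s ^ 2), (‖y‖ ^ 2 - s ^ 2)⁻¹ • y) from by rw [Real.mul_rpow h1 h2]; ring]
    rw [show (‖y‖ + s) * (‖y‖ - s) = ‖y‖ ^ 2 - s ^ 2 from by ring]
    rw [← Real.rpow_add hρ]
    rw [show ((d : ℝ) + 3) / 2 + ((-(((d : ℝ) - 1) / 2)) - 2) = 0 from by ring, Real.rpow_zero, one_mul]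
  · intro hueq s y hsy
    have hρ : 0 < ‖y‖ ^ 2 - s ^ 2 := by
      have h1 : |s| ^ 2 < ‖y‖ ^ 2 := by
        apply pow_lt_pow_left₀ hsy (abs_nonneg s); norm_num
      rw [sq_abs] at h1; linarith
    have hqU : (s / (‖y‖ ^ 2 - s ^ 2), (‖y‖ ^ 2 - s ^ 2)⁻¹ • y) ∈ {p : ℝ × EuclideanSpace ℝ (Fin d) | ‖p.2‖ > |p.1|} := by
      show |_| < ‖_‖
      rw [norm_smul, abs_div, norm_inv, Real.norm_eq_abs, abs_of_pos hρ, inv_mul_eq_div,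
        div_lt_div_iff_of_pos_right hρ]
      exact hsy
    have hd2 : ((d : ℝ) - 2) ≠ 0 := by
      have h3 : (3:ℝ) ≤ (d : ℝ) := by exact_mod_cast hd
      intro h; rw [sub_eq_zero] at h; linarith
    have hpow : (‖y‖ ^ 2 - s ^ 2) ^ (2 / ((d : ℝ) - 2))
          * ((‖y‖ ^ 2 - s ^ 2) ^ (-(((d : ℝ) - 1) / 2))) ^ (4 / ((d : ℝ) - 2))
          * ((‖y‖ ^ 2 - s ^ 2) ^ (-(((d : ℝ) - 1) / 2)))
        = (‖y‖ ^ 2 - s ^ 2) ^ ((-(((d : ℝ) - 1) / 2)) - 2) := by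
      rw [← Real.rpow_mul hρ.le, ← Real.rpow_add hρ, ← Real.rpow_add hρ]
      congr 1
      field_simp
      ring
    have hv : v (s, y) = (‖y‖ ^ 2 - s ^ 2) ^ (-(((d : ℝ) - 1) / 2)) * u (s / (‖y‖ ^ 2 - s ^ 2), (‖y‖ ^ 2 - s ^ 2)⁻¹ • y) := rfl
    rw [hcore s y hsy, hueq _ hqU, hv, abs_mul,
      abs_of_pos (Real.rpow_pos_of_pos hρ _),
      Real.mul_rpow (Real.rpow_nonneg hρ.le _) (abs_nonneg _)]
    rw [show (‖y‖ ^ 2 - s ^ 2) ^ (2 / ((d : ℝ) - 2))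
          * (((‖y‖ ^ 2 - s ^ 2) ^ (-(((d : ℝ) - 1) / 2))) ^ (4 / ((d : ℝ) - 2)) * |u (s / (‖y‖ ^ 2 - s ^ 2), (‖y‖ ^ 2 - s ^ 2)⁻¹ • y)| ^ (4 / ((d : ℝ) - 2)))
          * ((‖y‖ ^ 2 - s ^ 2) ^ (-(((d : ℝ) - 1) / 2)) * u (s / (‖y‖ ^ 2 - s ^ 2), (‖y‖ ^ 2 - s ^ 2)⁻¹ • y))
        = ((‖y‖ ^ 2 - s ^ 2) ^ (2 / ((d : ℝ) - 2))
            * ((‖y‖ ^ 2 - s ^ 2) ^ (-(((d : ℝ) - 1) / 2))) ^ (4 / ((d : ℝ) - 2)) * ((‖y‖ ^ 2 - s ^ 2) ^ (-(((d : ℝ) - 1) / 2))))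
            * (|u (s / (‖y‖ ^ 2 - s ^ 2), (‖y‖ ^ 2 - s ^ 2)⁻¹ • y)| ^ (4 / ((d : ℝ) - 2)) * u (s / (‖y‖ ^ 2 - s ^ 2), (‖y‖ ^ 2 - s ^ 2)⁻¹ • y)) from by ring, hpow]
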